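/- If g range-separates P and N (there exists z with g(x₁) > z > g(x₀) for all x₁ ∈ P, x₀ ∈ N), and the pruning thresholds remove exactly π₁|P̃| lowest-g examples from P̃ and π₀|Ñ| highest-g examples from Ñ, where π₁|P̃| = ρ₀|N| and π₀|Ñ| = ρ₁|P|, then the pruned sets satisfy P̃_conf = {x ∈ P : s=1} and Ñ_conf = {x ∈ N : s=0}. -/

import Mathlib

open MeasureTheory Set

noncomputable def Pr {Ω : Type*} [MeasurableSpace Ω] (μ : Measure Ω) (A : Set Ω) : ℝ :=
  (μ A).toReal

lemma stmt18_aux {Ω : Type*} [MeasurableSpace Ω] (μ : Measure Ω) [IsFiniteMeasure μ]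
    (P N T : Set Ω) (hP : MeasurableSet P) (hT : MeasurableSet T)
    (g : Ω → ℝ) (hg : Measurable g) (z k : ℝ)
    (hNc : N = Pᶜ)
    (hsepP : ∀ x ∈ P, z < g x) (hsepN : ∀ x ∈ N, g x < z)
    (h : μ (T ∩ {x | g x < k}) = μ (N ∩ T)) :
    μ (symmDiff (T ∩ {x | k ≤ g x}) (P ∩ T)) = 0 := by
  have hgk : MeasurableSet {x | g x < k} := measurableSet_lt hg measurable_const
  have hNm : MeasurableSet N := hNc ▸ hP.compl
  -- split T ∩ {g < k} by P / N
  have e1 : T ∩ {x | g x < k} =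
      (P ∩ T ∩ {x | g x < k}) ∪ (N ∩ T ∩ {x | g x < k}) := by
    rw [hNc]; ext x; simp only [mem_inter_iff, mem_union, mem_compl_iff]; tauto
  have hdisj1 : Disjoint (P ∩ T ∩ {x | g x < k}) (N ∩ T ∩ {x | g x < k}) := by
    rw [hNc, Set.disjoint_left]
    rintro x ⟨⟨hxP, -⟩, -⟩ ⟨⟨hxPc, -⟩, -⟩
    exact hxPc hxP
  have split1 : μ (T ∩ {x | g x < k}) =
      μ (P ∩ T ∩ {x | g x < k}) + μ (N ∩ T ∩ {x | g x < k}) := by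
    rw [e1, measure_union hdisj1 ((hNm.inter hT).inter hgk)]
  -- split N ∩ T by {g < k}
  have e2 : (N ∩ T) \ {x | g x < k} = N ∩ T ∩ {x | k ≤ g x} := by
    ext x; simp only [mem_diff, mem_inter_iff, mem_setOf_eq, not_lt]
  have split2 : μ (N ∩ T) =
      μ (N ∩ T ∩ {x | g x < k}) + μ (N ∩ T ∩ {x | k ≤ g x}) := by
    rw [← e2, ← measure_inter_add_diff (N ∩ T) hgk]
  -- cancellation
  have key : μ (P ∩ T ∩ {x | g x < k}) = μ (N ∩ T ∩ {x | k ≤ g x}) := by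
    have hc : μ (N ∩ T ∩ {x | g x < k}) ≠ ⊤ := measure_ne_top μ _
    have := split1.symm.trans (h.trans split2)
    -- this : μ (P∩T∩{g<k}) + μ (N∩T∩{g<k}) = μ (N∩T∩{g<k}) + μ (N∩T∩{k≤g})
    rw [add_comm (μ (P ∩ T ∩ {x | g x < k}))] at this
    exact WithTop.add_left_cancel hc this
  have hzero : μ (P ∩ T ∩ {x | g x < k}) = 0 ∧ μ (N ∩ T ∩ {x | k ≤ g x}) = 0 := by
    rcases le_or_gt k z with hk | hk
    · have he : P ∩ T ∩ {x | g x < k} = ∅ := by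
        rw [Set.eq_empty_iff_forall_notMem]
        rintro x ⟨⟨hxP, -⟩, hxg⟩
        exact absurd (hsepP x hxP) (not_lt.mpr (le_of_lt (lt_of_lt_of_le hxg hk)))
      refine ⟨by rw [he, measure_empty], by rw [← key, he, measure_empty]⟩
    · have he : N ∩ T ∩ {x | k ≤ g x} = ∅ := by
        rw [Set.eq_empty_iff_forall_notMem]
        rintro x ⟨⟨hxN, -⟩, hxg⟩
        exact absurd (lt_of_le_of_lt hxg (hsepN x hxN)) (not_lt.mpr (le_of_lt hk))
      refine ⟨by rw [key, he, measure_empty], by rw [he, measure_empty]⟩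
  -- symmDiff is contained in the union of the two null sets
  have hsub : symmDiff (T ∩ {x | k ≤ g x}) (P ∩ T) ⊆
      (N ∩ T ∩ {x | k ≤ g x}) ∪ (P ∩ T ∩ {x | g x < k}) := by
    intro x hx
    rw [Set.mem_symmDiff] at hx
    rcases hx with ⟨⟨hxT, hxg⟩, hnot⟩ | ⟨⟨hxP, hxT⟩, hnot⟩
    · left
      have hxN : x ∈ N := by
        rw [hNc]; intro hxP; exact hnot ⟨hxP, hxT⟩
      exact ⟨⟨hxN, hxT⟩, hxg⟩
    · right
      have : ¬ k ≤ g x := fun hk => hnot ⟨hxT, hk⟩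
      exact ⟨⟨hxP, hxT⟩, not_le.mp this⟩
  refine le_antisymm ?_ zero_le
  calc μ (symmDiff (T ∩ {x | k ≤ g x}) (P ∩ T))
      ≤ μ ((N ∩ T ∩ {x | k ≤ g x}) ∪ (P ∩ T ∩ {x | g x < k})) := measure_mono hsub
    _ ≤ μ (N ∩ T ∩ {x | k ≤ g x}) + μ (P ∩ T ∩ {x | g x < k}) := measure_union_le _ _
    _ = 0 := by rw [hzero.1, hzero.2, add_zero]

/-- If g range-separates P and N, and the pruning cutoffs k₁, k₀ remove
exactly mass π₁|P̃| = ρ₀|N| of lowest-g examples from P̃ = {s=1} and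
π₀|Ñ| = ρ₁|P| of highest-g examples from Ñ = {s=0}, then the pruned sets equal (up to
a μ-null set) P̃_conf = P ∩ {s=1} and Ñ_conf = N ∩ {s=0}. -/
theorem stmt18 {Ω : Type*} [MeasurableSpace Ω] (μ : Measure Ω) [IsProbabilityMeasure μ]
    (P N S : Set Ω)
    (hP : MeasurableSet P) (hN : MeasurableSet N) (hS : MeasurableSet S)
    (hdisj : P ∩ N = ∅) (hcover : P ∪ N = Set.univ)
    (g : Ω → ℝ) (hg : Measurable g) (z : ℝ)
    (hsepP : ∀ x ∈ P, z < g x) (hsepN : ∀ x ∈ N, g x < z)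
    (ρ₁ ρ₀ k₁ k₀ : ℝ) (hρ₁0 : 0 ≤ ρ₁) (hρ₀0 : 0 ≤ ρ₀) (hsum : ρ₁ + ρ₀ < 1)
    (hρ₁ : Pr μ (P ∩ Sᶜ) = ρ₁ * Pr μ P)
    (hρ₀ : Pr μ (N ∩ S) = ρ₀ * Pr μ N)
    -- the prune cutoffs remove exactly π₁|P̃| = ρ₀|N| and π₀|Ñ| = ρ₁|P| of mass:
    (hk₁ : Pr μ (S ∩ {x | g x < k₁}) = ρ₀ * Pr μ N)
    (hk₀ : Pr μ (Sᶜ ∩ {x | k₀ < g x}) = ρ₁ * Pr μ P) :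
    μ (symmDiff (S ∩ {x | k₁ ≤ g x}) (P ∩ S)) = 0 ∧
    μ (symmDiff (Sᶜ ∩ {x | g x ≤ k₀}) (N ∩ Sᶜ)) = 0 := by
  have hNc : N = Pᶜ := by
    apply Set.Subset.antisymm
    · intro x hxN hxP
      exact Set.eq_empty_iff_forall_notMem.mp hdisj x ⟨hxP, hxN⟩
    · intro x hx
      rcases (hcover ▸ Set.mem_univ x : x ∈ P ∪ N) with h | h
      · exact absurd h hx
      · exact h
  have hPc : P = Nᶜ := by rw [hNc, compl_compl]
  have toμ : ∀ A B : Set Ω, Pr μ A = Pr μ B → μ A = μ B := fun A B h =>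
    (ENNReal.toReal_eq_toReal_iff' (measure_ne_top μ _) (measure_ne_top μ _)).mp h
  constructor
  · exact stmt18_aux μ P N S hP hS g hg z k₁ hNc hsepP hsepN
      (toμ _ _ (hk₁.trans hρ₀.symm))
  · have h1 : μ (Sᶜ ∩ {x | (-g) x < -k₀}) = μ (P ∩ Sᶜ) := by
      have : {x | (-g) x < -k₀} = {x | k₀ < g x} := by
        ext x; simp only [mem_setOf_eq, Pi.neg_apply, neg_lt_neg_iff]
      rw [this]
      exact toμ _ _ (hk₀.trans hρ₁.symm)
    have := stmt18_aux μ N P Sᶜ hN hS.compl (-g) hg.neg (-z) (-k₀) hPc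
      (fun x hx => neg_lt_neg (hsepN x hx))
      (fun x hx => neg_lt_neg (hsepP x hx)) h1
    have heq : {x | -k₀ ≤ (-g) x} = {x | g x ≤ k₀} := by
      ext x; simp only [mem_setOf_eq, Pi.neg_apply, neg_le_neg_iff]
    rwa [heq] at this
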